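/- arXiv:1604.05806 — 3 statements merged into one kernel-verified Lean document; each statement's English description precedes it below -/
import Mathlib

section
/- Let λ > 0 and x ∈ ℝ, and let F(t) = (2λ/(2λ + log(1+λt)))·(1 + log(1+λt)/λ)^x. Then for every integer N ≥ 1 and every real t with 1 + λt > 0, 2λ + log(1+λt) > 0 and λ + log(1+λt) > 0, the N-th derivative of F at t satisfies F^{(N)}(t) = λ^N (1+λt)^{−N} · ( Σ_{r=1}^{N} Σ_{i=0}^{r} a_{i,r−i}(N,x) · (2λ + log(1+λt))^{−i} · (λ + log(1+λt))^{−(r−i)} ) · F(t), where a_{i,r−i}(N,x) = (−1)^{N+i−r} · i! · S_{1,i−1}(r−i) · (N−1)! · H_{N−1,r−1} · (x)_{r−i}. -/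
open Finset

/-- Generalized Changhee power sums with shifted index: `genChangheeS j N = S_{1,j-1}(N)`,
so that `genChangheeS 0 N = S_{1,-1}(N) = 1`, `genChangheeS 1 N = S_{1,0}(N) = N + 1`,
and `genChangheeS (j+2) N = S_{1,j+1}(N) = ∑_{l=0}^{N} S_{1,j}(l)`. -/
def genChangheeS : ℕ → ℕ → ℚ
  | 0, _ => 1
  | 1, N => N + 1
  | (j+2), N => ∑ l ∈ Finset.range (N+1), genChangheeS (j+1) l

/-- Generalized harmonic numbers `H_{N,j}`: `H_{N,0} = 1`,
`H_{N,1} = 1 + 1/2 + ⋯ + 1/N`, and `H_{N,j} = ∑_{l=j}^{N} H_{l-1,j-1}/l` for `j ≥ 2`. -/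
def genHarmonic : ℕ → ℕ → ℚ
  | _, 0 => 1
  | N, 1 => ∑ i ∈ Finset.range N, (1 : ℚ) / (i + 1)
  | N, (j+2) => ∑ l ∈ Finset.Icc (j+2) N, genHarmonic (l-1) (j+1) / l
termination_by N j => j

/-- Falling factorial `(x)_n = x(x-1)⋯(x-n+1)`, with `(x)_0 = 1`. -/
noncomputable def fallingFactorial (x : ℝ) (n : ℕ) : ℝ := ∏ i ∈ Finset.range n, (x - i)

lemma genChangheeS_zero_right (i : ℕ) : genChangheeS i 0 = 1 := by
  induction i with
  | zero => rfl
  | succ i ih =>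
    match i, ih with
    | 0, _ => simp [genChangheeS]
    | (j+1), ih => simp [genChangheeS, ih]

lemma genChangheeS_rec (i j : ℕ) :
    genChangheeS (i+1) (j+1) = genChangheeS i (j+1) + genChangheeS (i+1) j := by
  match i with
  | 0 => simp [genChangheeS]; ring
  | (i+1) =>
    show genChangheeS (i+2) (j+1) = _
    rw [genChangheeS, Finset.sum_range_succ]
    rw [show genChangheeS (i+2) j = ∑ l ∈ Finset.range (j+1), genChangheeS (i+1) l from rfl]
    ring

lemma genHarmonic_eq_zero {N k : ℕ} (h : N < k) : genHarmonic N k = 0 := by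
  match k with
  | 0 => omega
  | 1 =>
    have : N = 0 := by omega
    subst this; simp [genHarmonic]
  | (j+2) =>
    rw [genHarmonic]
    rw [Finset.Icc_eq_empty (by omega)]
    simp

lemma genHarmonic_rec (N k : ℕ) (hk : 1 ≤ k) :
    genHarmonic (N+1) k = genHarmonic N k + genHarmonic N (k-1) / (N+1) := by
  match k with
  | 1 => simp [genHarmonic, Finset.sum_range_succ]
  | (j+2) =>
    by_cases h : j + 2 ≤ N + 1
    · rw [genHarmonic, Finset.sum_Icc_succ_top h]
      conv_rhs => rw [genHarmonic]
      simp
    · rw [genHarmonic_eq_zero (by omega), genHarmonic_eq_zero (show N < j+2 by omega),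
        genHarmonic_eq_zero (show N < (j+2)-1 by omega)]
      simp

lemma fallingFactorial_succ (x : ℝ) (j : ℕ) :
    fallingFactorial x (j+1) = fallingFactorial x j * (x - j) := by
  simp [fallingFactorial, Finset.prod_range_succ]

/-! ## real versions -/

noncomputable def Hr (N k : ℕ) : ℝ := (genHarmonic N k : ℝ)
noncomputable def Sr (i j : ℕ) : ℝ := (genChangheeS i j : ℝ)

lemma Hr_zero {N k : ℕ} (h : N < k) : Hr N k = 0 := by simp [Hr, genHarmonic_eq_zero h]
lemma Hr_base (N : ℕ) : Hr N 0 = 1 := by simp [Hr, genHarmonic]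
lemma Hr_rec (N k : ℕ) (hk : 1 ≤ k) : Hr (N+1) k = Hr N k + Hr N (k-1)/(N+1) := by
  simp only [Hr, genHarmonic_rec N k hk]; push_cast; ring
lemma Sr_base (i : ℕ) : Sr i 0 = 1 := by simp [Sr, genChangheeS_zero_right]
lemma Sr_base' (j : ℕ) : Sr 0 j = 1 := by simp [Sr, genChangheeS]
lemma Sr_rec (i j : ℕ) : Sr (i+1) (j+1) = Sr i (j+1) + Sr (i+1) j := by
  simp [Sr, genChangheeS_rec]

noncomputable def cCoef (x : ℝ) (N i j : ℕ) : ℝ :=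
  (-1 : ℝ)^(N - j) * (Nat.factorial i : ℝ) * Sr i j * (Nat.factorial (N-1) : ℝ) *
    Hr (N-1) (i+j-1) * fallingFactorial x j

lemma cCoef_vanish (x : ℝ) {N i j : ℕ} (hN : 1 ≤ N) (h : N + 1 ≤ i + j) :
    cCoef x N i j = 0 := by
  have : Hr (N-1) (i+j-1) = 0 := Hr_zero (by omega)
  simp [cCoef, this]

lemma cCoef_rec_one (x : ℝ) (N i j : ℕ) (hN : 1 ≤ N) (h : i + j = 1) :
    cCoef x (N+1) i j = -(N:ℝ) * cCoef x N i j := by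
  obtain ⟨M, rfl⟩ : ∃ M, N = M + 1 := ⟨N - 1, by omega⟩
  rcases (show i = 1 ∧ j = 0 ∨ i = 0 ∧ j = 1 by omega) with ⟨rfl, rfl⟩ | ⟨rfl, rfl⟩
  · simp only [cCoef]
    rw [show (M+1+1-0 : ℕ) = (M-0)+1+1 by omega, show (M+1-0 : ℕ) = (M-0)+1 by omega,
      show (M+1+1-1 : ℕ) = M+1 by omega, show (M+1-1 : ℕ) = M by omega,
      show (1+0-1 : ℕ) = 0 by omega, Hr_base, Hr_base, Sr_base,
      pow_succ ((-1:ℝ)) ((M-0)+1), Nat.factorial_succ M]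
    push_cast
    ring
  · simp only [cCoef]
    rw [show (M+1+1-1 : ℕ) = M+1 by omega, show (M+1-1 : ℕ) = M by omega,
      show (0+1-1 : ℕ) = 0 by omega, Hr_base, Hr_base, Sr_base',
      pow_succ ((-1:ℝ)) M, Nat.factorial_succ M]
    push_cast
    ring

lemma cCoef_rec_j0 (x : ℝ) (N i : ℕ) (hN : 1 ≤ N) (hi : 2 ≤ i) (hi' : i ≤ N + 1) :
    cCoef x (N+1) i 0 = -(N:ℝ) * cCoef x N i 0 - (i:ℝ) * cCoef x N (i-1) 0 := by
  obtain ⟨M, rfl⟩ : ∃ M, N = M + 1 := ⟨N - 1, by omega⟩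
  obtain ⟨p, rfl⟩ : ∃ p, i = p + 2 := ⟨i - 2, by omega⟩
  simp only [cCoef]
  rw [show (p+2-1 : ℕ) = p+1 by omega,
    show (p+1+0-1 : ℕ) = p by omega,
    show (M+1+1-1 : ℕ) = M+1 by omega, show (M+1-1 : ℕ) = M by omega,
    show (M+1+1-0 : ℕ) = (M+1-0)+1 by omega, pow_succ ((-1:ℝ)) (M+1-0),
    Hr_rec M (p+1) (by omega), show (p+1-1 : ℕ) = p by omega,
    Sr_base, Sr_base,
    show Nat.factorial (M+1) = (M+1) * Nat.factorial M from rfl,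
    show Nat.factorial (p+2) = (p+2) * Nat.factorial (p+1) from rfl]
  push_cast
  field_simp
  ring

lemma cCoef_rec_gen (x : ℝ) (N i j : ℕ) (hN : 1 ≤ N) (hij : 2 ≤ i + j) (hj : 1 ≤ j)
    (hij' : i + j ≤ N + 1) :
    cCoef x (N+1) i j = -(N:ℝ) * cCoef x N i j - (i:ℝ) * cCoef x N (i-1) j
      + (x - ((j:ℝ)-1)) * cCoef x N i (j-1) := by
  obtain ⟨M, rfl⟩ : ∃ M, N = M + 1 := ⟨N - 1, by omega⟩
  obtain ⟨k, rfl⟩ : ∃ k, j = k + 1 := ⟨j - 1, by omega⟩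
  rcases le_or_gt (k+1) (M+1) with hkM | hkM
  · rcases Nat.eq_zero_or_pos i with rfl | hi
    · -- i = 0, 1 ≤ k ≤ M
      simp only [cCoef]
      rw [show (k+1-1 : ℕ) = k by omega,
        show (M+1+1-(k+1) : ℕ) = (M-k)+1 by omega,
        show (M+1-(k+1) : ℕ) = M-k by omega,
        show (M+1-k : ℕ) = (M-k)+1 by omega,
        show (M+1+1-1 : ℕ) = M+1 by omega, show (M+1-1 : ℕ) = M by omega,
        show (0+(k+1)-1 : ℕ) = k by omega, show (0+k-1 : ℕ) = k-1 by omega,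
        Hr_rec M k (by omega),
        Sr_base', Sr_base',
        fallingFactorial_succ x k,
        pow_succ ((-1:ℝ)) (M-k), Nat.factorial_succ M]
      push_cast
      field_simp
      ring
    · obtain ⟨m, rfl⟩ : ∃ m, i = m + 1 := ⟨i - 1, by omega⟩
      simp only [cCoef]
      rw [show (k+1-1 : ℕ) = k by omega, show (m+1-1 : ℕ) = m by omega,
        show (M+1+1-(k+1) : ℕ) = (M-k)+1 by omega,
        show (M+1-(k+1) : ℕ) = M-k by omega,
        show (M+1-k : ℕ) = (M-k)+1 by omega,
        show (M+1+1-1 : ℕ) = M+1 by omega, show (M+1-1 : ℕ) = M by omega,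
        show (m+1+(k+1)-1 : ℕ) = m+k+1 by omega,
        show (m+(k+1)-1 : ℕ) = m+k by omega,
        show (m+1+k-1 : ℕ) = m+k by omega,
        Hr_rec M (m+k+1) (by omega), show (m+k+1-1 : ℕ) = m+k by omega,
        Sr_rec m k,
        fallingFactorial_succ x k,
        pow_succ ((-1:ℝ)) (M-k), Nat.factorial_succ M, Nat.factorial_succ m]
      push_cast
      field_simp
      ring
  · -- j = M + 2, i = 0
    obtain rfl : k = M + 1 := by omega
    obtain rfl : i = 0 := by omega
    simp only [cCoef]
    rw [show (M+1+1-1 : ℕ) = M+1 by omega, show (M+1-1 : ℕ) = M by omega,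
      show (M+1+1-(M+1+1) : ℕ) = 0 by omega, show (M+1-(M+1+1) : ℕ) = 0 by omega,
      show (M+1-(M+1) : ℕ) = 0 by omega,
      show (0+(M+1+1)-1 : ℕ) = M+1 by omega, show (0+(M+1)-1 : ℕ) = M by omega,
      Hr_rec M (M+1) (by omega), show (M+1-1 : ℕ) = M by omega,
      Hr_zero (show M < M+1 by omega),
      Sr_base', Sr_base',
      fallingFactorial_succ x (M+1),
      show Nat.factorial (M+1) = (M+1) * Nat.factorial M from rfl]
    push_cast
    field_simp
    ring

/-- guarded coefficient -/
noncomputable def cg (x : ℝ) (N i j : ℕ) : ℝ :=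
  if 1 ≤ i + j ∧ i + j ≤ N then cCoef x N i j else 0

lemma cg_eq (x : ℝ) {N i j : ℕ} (hN : 1 ≤ N) (h1 : 1 ≤ i + j) (h2 : i + j ≤ N + 1) :
    cg x N i j = cCoef x N i j := by
  by_cases h : i + j ≤ N
  · exact if_pos ⟨h1, h⟩
  · rw [cg, if_neg (by omega), cCoef_vanish x hN (by omega)]

lemma cg_zero (x : ℝ) {N i j : ℕ} (h : ¬(1 ≤ i + j ∧ i + j ≤ N)) : cg x N i j = 0 :=
  if_neg h

lemma cg_rec (x : ℝ) (N i j : ℕ) (hN : 1 ≤ N) :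
    cg x (N+1) i j = -(N:ℝ) * cg x N i j - (i:ℝ) * cg x N (i-1) j
      + (if j = 0 then 0 else (x - ((j:ℝ)-1)) * cg x N i (j-1)) := by
  rcases Nat.eq_zero_or_pos (i + j) with h0 | hpos
  · obtain ⟨rfl, rfl⟩ : i = 0 ∧ j = 0 := by omega
    simp [cg]
  rcases le_or_gt (i + j) (N + 1) with hle | hgt
  · rcases eq_or_lt_of_le (show 1 ≤ i + j from hpos) with h1' | h2
    · -- i + j = 1
      rcases (show i = 1 ∧ j = 0 ∨ i = 0 ∧ j = 1 by omega) with ⟨rfl, rfl⟩ | ⟨rfl, rfl⟩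
      · rw [cg_eq x (N:=N+1) (i:=1) (j:=0) (by omega) (by omega) (by omega),
          cg_eq x (N:=N) (i:=1) (j:=0) hN (by omega) (by omega),
          cg_zero x (N:=N) (i:=0) (j:=0) (by omega),
          if_pos rfl, cCoef_rec_one x N 1 0 hN rfl]
        push_cast
        ring
      · rw [cg_eq x (N:=N+1) (i:=0) (j:=1) (by omega) (by omega) (by omega),
          cg_eq x (N:=N) (i:=0) (j:=1) hN (by omega) (by omega),
          if_neg (show ¬((1:ℕ) = 0) by omega),
          cg_zero x (N:=N) (i:=0) (j:=0) (by omega),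
          cCoef_rec_one x N 0 1 hN rfl]
        push_cast
        ring
    · -- 2 ≤ i + j ≤ N + 1
      rcases Nat.eq_zero_or_pos j with rfl | hj
      · -- j = 0, i ≥ 2
        rw [cg_eq x (N:=N+1) (i:=i) (j:=0) (by omega) (by omega) (by omega),
          cg_eq x (N:=N) (i:=i) (j:=0) hN (by omega) (by omega),
          cg_eq x (N:=N) (i:=i-1) (j:=0) hN (by omega) (by omega),
          if_pos rfl, cCoef_rec_j0 x N i hN (by omega) (by omega)]
        ring
      · rcases Nat.eq_zero_or_pos i with rfl | hi
        · -- i = 0, j ≥ 2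
          rw [cg_eq x (N:=N+1) (i:=0) (j:=j) (by omega) (by omega) (by omega),
            cg_eq x (N:=N) (i:=0) (j:=j) hN (by omega) (by omega),
            cg_eq x (N:=N) (i:=0) (j:=j-1) hN (by omega) (by omega),
            if_neg (show ¬(j = 0) by omega),
            cCoef_rec_gen x N 0 j hN (by omega) (by omega) (by omega)]
          try push_cast
          try ring
        · rw [cg_eq x (N:=N+1) (i:=i) (j:=j) (by omega) (by omega) (by omega),
            cg_eq x (N:=N) (i:=i) (j:=j) hN (by omega) (by omega),
            cg_eq x (N:=N) (i:=i-1) (j:=j) hN (by omega) (by omega),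
            cg_eq x (N:=N) (i:=i) (j:=j-1) hN (by omega) (by omega),
            if_neg (show ¬(j = 0) by omega),
            cCoef_rec_gen x N i j hN (by omega) (by omega) (by omega)]
          try ring
  · -- i + j ≥ N + 2
    rcases Nat.eq_zero_or_pos j with rfl | hj
    · rw [cg_zero x (N:=N+1) (i:=i) (j:=0) (by omega),
        cg_zero x (N:=N) (i:=i) (j:=0) (by omega),
        cg_zero x (N:=N) (i:=i-1) (j:=0) (by omega), if_pos rfl]
      ring
    · rcases Nat.eq_zero_or_pos i with rfl | hi
      · rw [cg_zero x (N:=N+1) (i:=0) (j:=j) (by omega),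
          cg_zero x (N:=N) (i:=0) (j:=j) (by omega),
          cg_zero x (N:=N) (i:=0) (j:=j-1) (by omega),
          if_neg (show ¬(j = 0) by omega)]
        push_cast
        ring
      · rw [cg_zero x (N:=N+1) (i:=i) (j:=j) (by omega),
          cg_zero x (N:=N) (i:=i) (j:=j) (by omega),
          cg_zero x (N:=N) (i:=i-1) (j:=j) (by omega),
          cg_zero x (N:=N) (i:=i) (j:=j-1) (by omega),
          if_neg (show ¬(j = 0) by omega)]
        ring

/-! ## grid sums -/

noncomputable def psiT (x : ℝ) (N M : ℕ) (a b : ℝ) : ℝ :=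
  ∑ i ∈ Finset.range M, ∑ j ∈ Finset.range M, cg x N i j * a^(-(i:ℤ)) * b^(-(j:ℤ))

lemma sum_shrink {g : ℕ → ℕ → ℝ} {M M' : ℕ} (h : M ≤ M')
    (hz : ∀ i j, M ≤ i ∨ M ≤ j → g i j = 0) :
    ∑ i ∈ Finset.range M', ∑ j ∈ Finset.range M', g i j
      = ∑ i ∈ Finset.range M, ∑ j ∈ Finset.range M, g i j := by
  have h1 : ∀ i, ∑ j ∈ Finset.range M', g i j = ∑ j ∈ Finset.range M, g i j := fun i =>
    (Finset.sum_subset (Finset.range_subset_range.2 h)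
      (fun j _ hj => hz i j (Or.inr (by simpa using hj)))).symm
  calc ∑ i ∈ Finset.range M', ∑ j ∈ Finset.range M', g i j
      = ∑ i ∈ Finset.range M', ∑ j ∈ Finset.range M, g i j :=
        Finset.sum_congr rfl (fun i _ => h1 i)
    _ = ∑ i ∈ Finset.range M, ∑ j ∈ Finset.range M, g i j :=
        (Finset.sum_subset (Finset.range_subset_range.2 h)
          (fun i _ hi => Finset.sum_eq_zero
            (fun j _ => hz i j (Or.inl (by simpa using hi))))).symm

lemma psiT_ext (x : ℝ) {N M M' : ℕ} (hM : N < M) (hM' : N < M') (a b : ℝ) :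
    psiT x N M a b = psiT x N M' a b := by
  unfold psiT
  rcases le_total M M' with h | h
  · exact (sum_shrink h (fun i j hij => by
      rw [cg_zero x (by omega)]; ring)).symm
  · exact sum_shrink h (fun i j hij => by
      rw [cg_zero x (by omega)]; ring)

lemma psi_step (x : ℝ) (N : ℕ) (hN : 1 ≤ N) (a b : ℝ) :
    psiT x (N+1) (N+3) a b
      = ∑ i ∈ Finset.range (N+2), ∑ j ∈ Finset.range (N+2),
          (-(N:ℝ) * cg x N i j * (a^(-(i:ℤ)) * b^(-(j:ℤ)))
            - ((i:ℝ)+1) * cg x N i j * (a^(-(i:ℤ)-1) * b^(-(j:ℤ)))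
            + (x - (j:ℝ)) * cg x N i j * (a^(-(i:ℤ)) * b^(-(j:ℤ)-1))) := by
  have hA : (∑ i ∈ Finset.range (N+3), ∑ j ∈ Finset.range (N+3),
        -(N:ℝ) * cg x N i j * (a^(-(i:ℤ)) * b^(-(j:ℤ))))
      = ∑ i ∈ Finset.range (N+2), ∑ j ∈ Finset.range (N+2),
        -(N:ℝ) * cg x N i j * (a^(-(i:ℤ)) * b^(-(j:ℤ))) :=
    sum_shrink (by omega) (fun i j hij => by rw [cg_zero x (by omega)]; ring)
  have hB : (∑ i ∈ Finset.range (N+3), ∑ j ∈ Finset.range (N+3),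
        (i:ℝ) * cg x N (i-1) j * (a^(-(i:ℤ)) * b^(-(j:ℤ))))
      = ∑ i ∈ Finset.range (N+2), ∑ j ∈ Finset.range (N+2),
        ((i:ℝ)+1) * cg x N i j * (a^(-(i:ℤ)-1) * b^(-(j:ℤ))) := by
    rw [sum_shrink (show N+2 ≤ N+3 by omega) (fun i j hij => by
      rcases Nat.eq_zero_or_pos i with rfl | hi
      · simp
      · rw [cg_zero x (by omega)]; ring)]
    rw [show (N+2:ℕ) = (N+1)+1 from rfl, Finset.sum_range_succ']
    simp only [Nat.cast_zero, zero_mul, Finset.sum_const_zero, add_zero]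
    rw [Finset.sum_subset (Finset.range_subset_range.2 (show N+1 ≤ (N+1)+1 by omega))
      (fun i _ hi => Finset.sum_eq_zero (fun j _ => by
        have hi' : N+1 ≤ i := by simpa using hi
        rw [cg_zero x (by omega)]; ring))]
    refine Finset.sum_congr rfl fun i _ => Finset.sum_congr rfl fun j _ => ?_
    rw [Nat.add_sub_cancel, show (-((i+1:ℕ):ℤ)) = -(i:ℤ)-1 by push_cast; ring]
    push_cast
    ring
  have hC : (∑ i ∈ Finset.range (N+3), ∑ j ∈ Finset.range (N+3),
        (if j = 0 then 0 else (x - ((j:ℝ)-1)) * cg x N i (j-1) * (a^(-(i:ℤ)) * b^(-(j:ℤ)))))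
      = ∑ i ∈ Finset.range (N+2), ∑ j ∈ Finset.range (N+2),
        (x - (j:ℝ)) * cg x N i j * (a^(-(i:ℤ)) * b^(-(j:ℤ)-1)) := by
    rw [sum_shrink (show N+2 ≤ N+3 by omega) (fun i j hij => by
      rcases Nat.eq_zero_or_pos j with rfl | hj
      · simp
      · rw [if_neg (by omega), cg_zero x (by omega)]; ring)]
    refine Finset.sum_congr rfl fun i _ => ?_
    rw [show (N+2:ℕ) = (N+1)+1 from rfl, Finset.sum_range_succ']
    rw [if_pos rfl, add_zero]
    rw [Finset.sum_subset (Finset.range_subset_range.2 (show N+1 ≤ (N+1)+1 by omega))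
      (fun j _ hj => by
        have hj' : N+1 ≤ j := by simpa using hj
        rw [if_neg (by omega), cg_zero x (by omega)]; ring)]
    refine Finset.sum_congr rfl fun j _ => ?_
    rw [if_neg (by omega), Nat.add_sub_cancel,
      show (-((j+1:ℕ):ℤ)) = -(j:ℤ)-1 by push_cast; ring]
    push_cast
    ring
  calc psiT x (N+1) (N+3) a b
      = ∑ i ∈ Finset.range (N+3), ∑ j ∈ Finset.range (N+3),
          (-(N:ℝ) * cg x N i j * (a^(-(i:ℤ)) * b^(-(j:ℤ)))
            - (i:ℝ) * cg x N (i-1) j * (a^(-(i:ℤ)) * b^(-(j:ℤ)))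
            + (if j = 0 then 0 else (x - ((j:ℝ)-1)) * cg x N i (j-1) * (a^(-(i:ℤ)) * b^(-(j:ℤ))))) := by
        unfold psiT
        refine Finset.sum_congr rfl fun i _ => Finset.sum_congr rfl fun j _ => ?_
        rw [cg_rec x N i j hN]
        split_ifs <;> ring
    _ = (∑ i ∈ Finset.range (N+3), ∑ j ∈ Finset.range (N+3),
          -(N:ℝ) * cg x N i j * (a^(-(i:ℤ)) * b^(-(j:ℤ))))
        - (∑ i ∈ Finset.range (N+3), ∑ j ∈ Finset.range (N+3),
          (i:ℝ) * cg x N (i-1) j * (a^(-(i:ℤ)) * b^(-(j:ℤ))))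
        + (∑ i ∈ Finset.range (N+3), ∑ j ∈ Finset.range (N+3),
          (if j = 0 then 0 else (x - ((j:ℝ)-1)) * cg x N i (j-1) * (a^(-(i:ℤ)) * b^(-(j:ℤ))))) := by
        simp only [Finset.sum_add_distrib, Finset.sum_sub_distrib]
    _ = (∑ i ∈ Finset.range (N+2), ∑ j ∈ Finset.range (N+2),
          -(N:ℝ) * cg x N i j * (a^(-(i:ℤ)) * b^(-(j:ℤ))))
        - (∑ i ∈ Finset.range (N+2), ∑ j ∈ Finset.range (N+2),
          ((i:ℝ)+1) * cg x N i j * (a^(-(i:ℤ)-1) * b^(-(j:ℤ))))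
        + (∑ i ∈ Finset.range (N+2), ∑ j ∈ Finset.range (N+2),
          (x - (j:ℝ)) * cg x N i j * (a^(-(i:ℤ)) * b^(-(j:ℤ)-1))) := by
        rw [hA, hB, hC]
    _ = _ := by
        rw [← Finset.sum_sub_distrib, ← Finset.sum_add_distrib]
        refine Finset.sum_congr rfl fun i _ => ?_
        rw [← Finset.sum_sub_distrib, ← Finset.sum_add_distrib]

/-! ## analysis -/

lemma psi_step' (x : ℝ) (n : ℕ) (hn : 1 ≤ n) (a b : ℝ) (ha : a ≠ 0) (hb : b ≠ 0) :
    psiT x (n+1) (n+3) a b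
      = -(n:ℝ) * psiT x n (n+2) a b
        + (∑ i ∈ Finset.range (n+2), ∑ j ∈ Finset.range (n+2), cg x n i j *
            (-(i:ℝ) * (a^(-(i:ℤ)-1) * b^(-(j:ℤ))) - (j:ℝ) * (a^(-(i:ℤ)) * b^(-(j:ℤ)-1))))
        + (x * b⁻¹ - a⁻¹) * psiT x n (n+2) a b := by
  rw [psi_step x n hn a b]
  unfold psiT
  simp only [Finset.mul_sum]
  rw [← Finset.sum_add_distrib, ← Finset.sum_add_distrib]
  refine Finset.sum_congr rfl fun i _ => ?_
  rw [← Finset.sum_add_distrib, ← Finset.sum_add_distrib]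
  refine Finset.sum_congr rfl fun j _ => ?_
  rw [zpow_sub_one₀ ha (-(i:ℤ)), zpow_sub_one₀ hb (-(j:ℤ))]
  ring

lemma hasDerivAt_log1p (l t : ℝ) (h1 : 1 + l * t ≠ 0) :
    HasDerivAt (fun s => Real.log (1 + l*s)) (l / (1 + l*t)) t := by
  have h : HasDerivAt (fun s : ℝ => 1 + l*s) l t := by
    simpa using ((hasDerivAt_id t).const_mul l).const_add 1
  simpa using h.log h1

lemma hasDerivAt_F (l x t : ℝ) (hl : 0 < l) (h1 : 0 < 1 + l*t)
    (h2 : 0 < 2*l + Real.log (1 + l*t)) (h3 : 0 < l + Real.log (1 + l*t)) :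
    HasDerivAt (fun s => 2*l / (2*l + Real.log (1 + l*s)) * (1 + Real.log (1 + l*s) / l) ^ x)
      (l / (1+l*t) * (x * (l + Real.log (1+l*t))⁻¹ - (2*l + Real.log (1+l*t))⁻¹) *
        (2*l / (2*l + Real.log (1+l*t)) * (1 + Real.log (1+l*t) / l) ^ x)) t := by
  have hL := hasDerivAt_log1p l t (ne_of_gt h1)
  have hA : HasDerivAt (fun s => 2*l + Real.log (1 + l*s)) (l/(1+l*t)) t := hL.const_add (2*l)
  have hu : HasDerivAt (fun s => 1 + Real.log (1 + l*s)/l) ((l/(1+l*t))/l) t :=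
    (hL.div_const l).const_add 1
  have hu0 : (0:ℝ) < 1 + Real.log (1+l*t)/l := by
    have he : 1 + Real.log (1+l*t)/l = (l + Real.log (1+l*t))/l := by field_simp
    rw [he]; positivity
  have hf1 : HasDerivAt (fun s => 2*l / (2*l + Real.log (1 + l*s)))
      ((0 * (2*l + Real.log (1+l*t)) - 2*l * (l/(1+l*t))) / (2*l + Real.log (1+l*t))^2) t :=
    (hasDerivAt_const t (2*l)).div hA (ne_of_gt h2)
  have hf2 : HasDerivAt (fun s => (1 + Real.log (1 + l*s)/l) ^ x)
      ((l/(1+l*t))/l * x * (1 + Real.log (1+l*t)/l) ^ (x-1)) t :=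
    hu.rpow_const (Or.inl (ne_of_gt hu0))
  have := hf1.mul hf2
  convert this using 1
  case e'_4 => rfl
  case e'_5 => rfl
  case e'_8 => rfl
  rw [Real.rpow_sub hu0, Real.rpow_one]
  have h1' := ne_of_gt h1
  have h2' := ne_of_gt h2
  have h3' := ne_of_gt h3
  have hl' := ne_of_gt hl
  have hu0' := ne_of_gt hu0
  have h2'' : l*2 + Real.log (1+l*t) ≠ 0 := by linarith
  field_simp
  ring

lemma hasDerivAt_psiT (l x t : ℝ) (N M : ℕ) (h1 : (1:ℝ) + l * t ≠ 0)
    (hA : 2*l + Real.log (1+l*t) ≠ 0) (hB : l + Real.log (1+l*t) ≠ 0) :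
    HasDerivAt (fun s => psiT x N M (2*l + Real.log (1+l*s)) (l + Real.log (1+l*s)))
      (l/(1+l*t) * (∑ i ∈ Finset.range M, ∑ j ∈ Finset.range M, cg x N i j *
        (-(i:ℝ) * ((2*l + Real.log (1+l*t))^(-(i:ℤ)-1) * (l + Real.log (1+l*t))^(-(j:ℤ)))
          - (j:ℝ) * ((2*l + Real.log (1+l*t))^(-(i:ℤ)) * (l + Real.log (1+l*t))^(-(j:ℤ)-1))))) t := by
  have hL := hasDerivAt_log1p l t h1
  have hAd : HasDerivAt (fun s => 2*l + Real.log (1 + l*s)) (l/(1+l*t)) t := hL.const_add (2*l)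
  have hBd : HasDerivAt (fun s => l + Real.log (1 + l*s)) (l/(1+l*t)) t := hL.const_add l
  have hzA : ∀ i : ℕ, HasDerivAt (fun s => (2*l + Real.log (1 + l*s))^(-(i:ℤ)))
      ((((-(i:ℤ)) : ℝ)) * (2*l + Real.log (1+l*t))^(-(i:ℤ)-1) * (l/(1+l*t))) t := fun i => by
    have := (hasDerivAt_zpow (-(i:ℤ)) _ (Or.inl hA)).comp t hAd
    simpa [Function.comp_def] using this
  have hzB : ∀ j : ℕ, HasDerivAt (fun s => (l + Real.log (1 + l*s))^(-(j:ℤ)))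
      ((((-(j:ℤ)) : ℝ)) * (l + Real.log (1+l*t))^(-(j:ℤ)-1) * (l/(1+l*t))) t := fun j => by
    have := (hasDerivAt_zpow (-(j:ℤ)) _ (Or.inl hB)).comp t hBd
    simpa [Function.comp_def] using this
  have h := HasDerivAt.sum (u := Finset.range M)
    (fun i _ => HasDerivAt.sum (u := Finset.range M)
      (fun j _ => (((hzA i).const_mul (cg x N i j)).mul (hzB j))))
  unfold psiT
  convert h using 1
  case e'_4 => rfl
  case e'_5 => rfl
  case e'_8 => ext s; simp only [Finset.sum_apply, Pi.mul_apply]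
  rw [Finset.mul_sum]
  refine Finset.sum_congr rfl fun i _ => ?_
  rw [Finset.mul_sum]
  refine Finset.sum_congr rfl fun j _ => ?_
  push_cast
  ring

lemma psi_one (x a b : ℝ) : psiT x 1 3 a b = x * b^(-1:ℤ) - a^(-1:ℤ) := by
  unfold psiT
  norm_num [Finset.sum_range_succ, cg, cCoef, Sr_base, Sr_base', Hr_base,
    fallingFactorial, Finset.prod_range_one]
  ring

lemma psiT_eq_stmt (x a b : ℝ) (N : ℕ) (hN : 1 ≤ N) :
    psiT x N (N+2) a b
      = ∑ r ∈ Finset.Icc 1 N, ∑ i ∈ Finset.range (r+1),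
          ((-1 : ℝ) ^ (N + i - r) * (Nat.factorial i : ℝ) * ((genChangheeS i (r - i) : ℚ) : ℝ) *
              (Nat.factorial (N - 1) : ℝ) * ((genHarmonic (N - 1) (r - 1) : ℚ) : ℝ) *
              fallingFactorial x (r - i)) *
            a ^ (-(i : ℤ)) * b ^ (-((r - i : ℕ) : ℤ)) := by
  have key : ∀ r ∈ Finset.Icc 1 N, ∀ i ∈ Finset.range (r+1),
      cg x N i (r-i) * a ^ (-(i : ℤ)) * b ^ (-((r - i : ℕ) : ℤ))
        = ((-1 : ℝ) ^ (N + i - r) * (Nat.factorial i : ℝ) * ((genChangheeS i (r - i) : ℚ) : ℝ) *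
              (Nat.factorial (N - 1) : ℝ) * ((genHarmonic (N - 1) (r - 1) : ℚ) : ℝ) *
              fallingFactorial x (r - i)) *
            a ^ (-(i : ℤ)) * b ^ (-((r - i : ℕ) : ℤ)) := by
    intro r hr i hi
    rw [Finset.mem_Icc] at hr
    rw [Finset.mem_range] at hi
    rw [cg_eq x hN (by omega) (by omega)]
    unfold cCoef Sr Hr
    rw [show (N - (r-i) : ℕ) = N + i - r by omega, show (i + (r-i) - 1 : ℕ) = r - 1 by omega]
  rw [← Finset.sum_congr rfl (fun r hr => Finset.sum_congr rfl (fun i hi => key r hr i hi))]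
  -- now goal : psiT = ∑ r ∑ i, cg x N i (r-i) * a^(-i) * b^(-(r-i))
  unfold psiT
  have step1 : ∀ i ∈ Finset.range (N+2), ∀ j ∈ Finset.range (N+2),
      cg x N i j * a^(-(i:ℤ)) * b^(-(j:ℤ))
        = ∑ r ∈ Finset.Icc 1 N, (if i + j = r then cg x N i j * a^(-(i:ℤ)) * b^(-(j:ℤ)) else 0) := by
    intro i _ j _
    rw [Finset.sum_ite_eq]
    by_cases h : i + j ∈ Finset.Icc 1 N
    · rw [if_pos h]
    · rw [if_neg h]
      rw [Finset.mem_Icc] at h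
      rw [cg_zero x (by omega)]
      ring
  rw [Finset.sum_congr rfl (fun i hi => Finset.sum_congr rfl (fun j hj => step1 i hi j hj))]
  rw [Finset.sum_congr rfl (fun i (_ : i ∈ Finset.range (N+2)) => Finset.sum_comm)]
  rw [Finset.sum_comm]
  refine Finset.sum_congr rfl fun r hr => ?_
  rw [Finset.mem_Icc] at hr
  have inner : ∀ i ∈ Finset.range (N+2),
      (∑ j ∈ Finset.range (N+2), if i + j = r then cg x N i j * a^(-(i:ℤ)) * b^(-(j:ℤ)) else 0)
        = (if i ≤ r then cg x N i (r-i) * a^(-(i:ℤ)) * b^(-((r-i:ℕ):ℤ)) else 0) := by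
    intro i _
    by_cases hir : i ≤ r
    · rw [if_pos hir]
      rw [Finset.sum_congr rfl (fun j (_ : j ∈ Finset.range (N+2)) =>
        if_congr (show (i + j = r) ↔ (r - i = j) by omega) rfl rfl)]
      rw [Finset.sum_ite_eq (Finset.range (N+2)) (r-i)
        (fun j => cg x N i j * a^(-(i:ℤ)) * b^(-(j:ℤ)))]
      rw [if_pos (Finset.mem_range.2 (by omega))]
    · rw [if_neg hir]
      exact Finset.sum_eq_zero fun j _ => if_neg (by omega)
  rw [Finset.sum_congr rfl inner]
  rw [← Finset.sum_subset (Finset.range_subset_range.2 (show r+1 ≤ N+2 by omega))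
    (fun i _ hi => if_neg (by simp only [Finset.mem_range] at hi; omega))]
  exact Finset.sum_congr rfl fun i hi =>
    if_pos (by rw [Finset.mem_range] at hi; omega)

/-- The `N`-th derivative of `F(t) = (2λ/(2λ + log(1+λt)))·(1 + log(1+λt)/λ)^x` satisfies
`F^{(N)}(t) = λ^N (1+λt)^{-N} · (∑_{r=1}^{N} ∑_{i=0}^{r} a_{i,r-i}(N,x)
(2λ + log(1+λt))^{-i} (λ + log(1+λt))^{-(r-i)}) · F(t)`, where
`a_{i,r-i}(N,x) = (-1)^{N+i-r} i! S_{1,i-1}(r-i) (N-1)! H_{N-1,r-1} (x)_{r-i}`. -/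
theorem iteratedDeriv_changhee_gen (l x : ℝ) (hl : 0 < l) (N : ℕ) (hN : 1 ≤ N) (t : ℝ)
    (h1 : 0 < 1 + l * t) (h2 : 0 < 2 * l + Real.log (1 + l * t))
    (h3 : 0 < l + Real.log (1 + l * t)) :
    iteratedDeriv N
        (fun s : ℝ => 2*l / (2*l + Real.log (1 + l*s)) * (1 + Real.log (1 + l*s) / l) ^ x) t
      = l ^ N * (1 + l * t) ^ (-(N : ℤ)) *
        (∑ r ∈ Finset.Icc 1 N, ∑ i ∈ Finset.range (r + 1),
          ((-1 : ℝ) ^ (N + i - r) * (Nat.factorial i : ℝ) * (genChangheeS i (r - i) : ℝ) *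
              (Nat.factorial (N - 1) : ℝ) * (genHarmonic (N - 1) (r - 1) : ℝ) *
              fallingFactorial x (r - i)) *
            (2 * l + Real.log (1 + l * t)) ^ (-(i : ℤ)) *
            (l + Real.log (1 + l * t)) ^ (-((r - i : ℕ) : ℤ))) *
        (2*l / (2*l + Real.log (1 + l*t)) * (1 + Real.log (1 + l*t) / l) ^ x) := by
  have main : ∀ n : ℕ, 1 ≤ n → ∀ t : ℝ, 0 < 1 + l * t → 0 < 2 * l + Real.log (1 + l * t) →
      0 < l + Real.log (1 + l * t) →
      iteratedDeriv n
          (fun s : ℝ => 2*l / (2*l + Real.log (1 + l*s)) * (1 + Real.log (1 + l*s) / l) ^ x) t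
        = l ^ n * (1 + l * t) ^ (-(n : ℤ)) *
          psiT x n (n+2) (2*l + Real.log (1 + l*t)) (l + Real.log (1 + l*t)) *
          (2*l / (2*l + Real.log (1 + l*t)) * (1 + Real.log (1 + l*t) / l) ^ x) := by
    intro n hn
    induction n, hn using Nat.le_induction with
    | base =>
      intro t h1 h2 h3
      rw [iteratedDeriv_one, (hasDerivAt_F l x t hl h1 h2 h3).deriv,
        show ((1:ℕ)+2 : ℕ) = 3 from rfl, psi_one, pow_one,
        show (-((1:ℕ):ℤ)) = -1 by norm_num]
      simp only [zpow_neg_one]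
      ring
    | succ n hn ih =>
      intro t h1 h2 h3
      have c1 : ContinuousAt (fun s : ℝ => 1 + l*s) t :=
        (continuous_const.add (continuous_const.mul continuous_id)).continuousAt
      have clog : ContinuousAt (fun s : ℝ => Real.log (1 + l*s)) t := by
        have := ContinuousAt.comp (g := Real.log) (f := fun s : ℝ => 1 + l * s) (x := t)
          (Real.continuousAt_log (ne_of_gt h1)) c1
        exact this
      have c2 : ContinuousAt (fun s : ℝ => 2*l + Real.log (1 + l*s)) t :=
        continuousAt_const.add clog
      have c3 : ContinuousAt (fun s : ℝ => l + Real.log (1 + l*s)) t :=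
        continuousAt_const.add clog
      have e1 : ∀ᶠ s in nhds t, 0 < 1 + l*s := c1.eventually (eventually_gt_nhds h1)
      have e2 : ∀ᶠ s in nhds t, 0 < 2*l + Real.log (1 + l*s) :=
        c2.eventually (eventually_gt_nhds h2)
      have e3 : ∀ᶠ s in nhds t, 0 < l + Real.log (1 + l*s) :=
        c3.eventually (eventually_gt_nhds h3)
      have hev : iteratedDeriv n
          (fun s : ℝ => 2*l / (2*l + Real.log (1 + l*s)) * (1 + Real.log (1 + l*s) / l) ^ x)
          =ᶠ[nhds t] (fun s : ℝ => l ^ n * (1 + l * s) ^ (-(n : ℤ)) *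
            psiT x n (n+2) (2*l + Real.log (1 + l*s)) (l + Real.log (1 + l*s)) *
            (2*l / (2*l + Real.log (1 + l*s)) * (1 + Real.log (1 + l*s) / l) ^ x)) := by
        filter_upwards [e1, e2, e3] with s hs1 hs2 hs3
        exact ih s hs1 hs2 hs3
      rw [iteratedDeriv_succ, hev.deriv_eq]
      have hlin : HasDerivAt (fun s : ℝ => 1 + l*s) l t := by
        simpa using ((hasDerivAt_id t).const_mul l).const_add 1
      have hz : HasDerivAt (fun s : ℝ => (1 + l*s)^(-(n:ℤ)))
          ((((-(n:ℤ)):ℝ)) * (1+l*t)^(-(n:ℤ)-1) * l) t := by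
        have := (hasDerivAt_zpow (-(n:ℤ)) _ (Or.inl (ne_of_gt h1))).comp t hlin
        simpa [Function.comp_def] using this
      have hp := hasDerivAt_psiT l x t n (n+2) (ne_of_gt h1) (ne_of_gt h2) (ne_of_gt h3)
      have hF := hasDerivAt_F l x t hl h1 h2 h3
      have hR : HasDerivAt (fun s : ℝ => l ^ n * (1 + l * s) ^ (-(n : ℤ)) *
            psiT x n (n+2) (2*l + Real.log (1 + l*s)) (l + Real.log (1 + l*s)) *
            (2*l / (2*l + Real.log (1 + l*s)) * (1 + Real.log (1 + l*s) / l) ^ x)) _ t :=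
        ((hz.const_mul (l^n)).mul hp).mul hF
      rw [hR.deriv]
      simp only [Pi.mul_apply]
      rw [show ((n+1)+2 : ℕ) = n+3 from rfl,
        psi_step' x n hn _ _ (ne_of_gt h2) (ne_of_gt h3),
        show (-((n+1:ℕ):ℤ)) = -(n:ℤ) - 1 by push_cast; ring,
        zpow_sub_one₀ (ne_of_gt h1) (-(n:ℤ))]
      push_cast
      ring
  rw [main N hN t h1 h2 h3, psiT_eq_stmt x _ _ N hN]
end

section
/- For every integer N ≥ 1, a_{1,N}(N+1,x) = −(N+1)·(x)_N. -/
open Finset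

/-- The coefficients `a_{i,j}(N, x)` arising from repeated differentiation of the
λ-Changhee generating function: `a_{0,0}(N,x) = 0`, `a_{1,0}(1,x) = -1`, `a_{0,1}(1,x) = x`,
and for `N ≥ 1`, `i, j ≥ 0` with `1 ≤ i + j ≤ N + 1`,
`a_{i,j}(N+1,x) = -N·a_{i,j}(N,x) - i·a_{i-1,j}(N,x) + (x - j + 1)·a_{i,j-1}(N,x)`,
with the convention that `a_{i,j}(N,x) = 0` whenever `i < 0`, `j < 0`, or `i + j > N`. -/
noncomputable def aCh : ℕ → ℤ → ℤ → ℝ → ℝ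
  | 0, _, _, _ => 0
  | 1, i, j, x => if i = 1 ∧ j = 0 then -1 else if i = 0 ∧ j = 1 then x else 0
  | (N+2), i, j, x =>
      if 0 ≤ i ∧ 0 ≤ j ∧ 1 ≤ i + j ∧ i + j ≤ N + 2 then
        -(N+1 : ℝ) * aCh (N+1) i j x - (i : ℝ) * aCh (N+1) (i-1) j x
          + (x - (j : ℝ) + 1) * aCh (N+1) i (j-1) x
      else 0

lemma fall_succ (x : ℝ) (n : ℕ) :
    fallingFactorial x (n+1) = fallingFactorial x n * (x - n) := by
  simp [fallingFactorial, Finset.prod_range_succ]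

lemma aCh_1N_zero (N : ℕ) (hN : 1 ≤ N) (x : ℝ) : aCh N 1 (N : ℤ) x = 0 := by
  match N, hN with
  | 1, _ => simp [aCh]
  | (n+2), _ =>
      rw [aCh, if_neg]
      omega

lemma aCh_0N (N : ℕ) (hN : 1 ≤ N) (x : ℝ) :
    aCh N 0 (N : ℤ) x = fallingFactorial x N := by
  induction N with
  | zero => omega
  | succ n ih =>
    rcases Nat.eq_or_lt_of_le hN with h | h
    · obtain rfl : n = 0 := by omega
      norm_num [aCh, fallingFactorial]
    · obtain ⟨m, rfl⟩ : ∃ m, n = m + 1 := ⟨n - 1, by omega⟩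
      rw [show m + 1 + 1 = m + 2 from rfl, aCh, if_pos (by omega)]
      have h1 : aCh (m+1) 0 (((m+1:ℕ):ℤ)+1) x = 0 := by
        match m with
        | 0 => simp [aCh]
        | k+1 =>
          rw [show k + 1 + 1 = k + 2 from rfl, aCh, if_neg]
          omega
      have h3 := ih (by omega)
      rw [show ((((m+1+1:ℕ)):ℤ)) = (((m+1:ℕ):ℤ)+1) from by push_cast; ring] at *
      rw [h1, show (((m+1:ℕ):ℤ)+1-1) = ((m+1:ℕ):ℤ) from by ring, h3,
        show m+2 = m+1+1 from rfl, fall_succ x (m+1)]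
      push_cast
      ring

/-- `a_{1,N}(N+1,x) = -(N+1)·(x)_N` for `N ≥ 1`. -/
theorem aCh_one_N (N : ℕ) (hN : 1 ≤ N) (x : ℝ) :
    aCh (N + 1) 1 (N : ℤ) x = -((N : ℝ) + 1) * fallingFactorial x N := by
  induction N with
  | zero => omega
  | succ n ih =>
    rcases Nat.eq_or_lt_of_le hN with h | h
    · obtain rfl : n = 0 := by omega
      norm_num [aCh, fallingFactorial]
      ring
    · obtain ⟨m, rfl⟩ : ∃ m, n = m + 1 := ⟨n - 1, by omega⟩
      rw [show m + 1 + 1 + 1 = m + 1 + 2 from rfl, aCh, if_pos (by omega)]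
      have h1 : aCh (m+1+1) 1 (((m+1+1:ℕ):ℤ)) x = 0 := aCh_1N_zero (m+2) (by omega) x
      have h2 : aCh (m+1+1) 0 (((m+1+1:ℕ):ℤ)) x = fallingFactorial x (m+2) :=
        aCh_0N (m+2) (by omega) x
      have h3 := ih (by omega)
      rw [show ((((m+1+1:ℕ):ℤ))-1) = ((m+1:ℕ):ℤ) from by push_cast; ring,
        h1, show ((1:ℤ)-1) = 0 from by norm_num, h2, h3, fall_succ x (m+1)]
      push_cast
      ring
end

section
/- For all integers N and r with 2 ≤ r ≤ N, the coefficients a_{r,0} satisfy the unrolled recursion a_{r,0}(N+1,x) = −r · Σ_{i=0}^{N−r+1} (−1)^i (N)_i · a_{r−1,0}(N−i,x), where (N)_i = N(N−1)⋯(N−i+1). -/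
open Finset

lemma aCh_negj (M : ℕ) (r : ℤ) (x : ℝ) : aCh M r (-1) x = 0 := by
  match M with
  | 0 => simp [aCh]
  | 1 => simp [aCh]
  | (K+2) =>
    rw [aCh, if_neg]
    rintro ⟨-, h, -, -⟩; omega

lemma aCh_zero_of_gt (M : ℕ) (r : ℤ) (h : (M:ℤ) < r) (x : ℝ) : aCh M r 0 x = 0 := by
  match M with
  | 0 => simp [aCh]
  | 1 =>
    rw [aCh, if_neg, if_neg]
    · rintro ⟨h1, -⟩; omega
    · rintro ⟨h1, -⟩; omega
  | (K+2) =>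
    rw [aCh, if_neg]
    rintro ⟨-, -, -, h4⟩
    push_cast at h
    omega

lemma aCh_rec (K : ℕ) (r : ℤ) (h1 : 1 ≤ r) (h2 : r ≤ (K:ℤ)+2) (x : ℝ) :
    aCh (K+2) r 0 x = -((K:ℝ)+1) * aCh (K+1) r 0 x - (r:ℝ) * aCh (K+1) (r-1) 0 x := by
  rw [aCh, if_pos (by constructor <;> omega)]
  rw [show (0:ℤ) - 1 = -1 by ring, aCh_negj]
  ring

lemma ff_succ (N i : ℕ) : fallingFactorial ((N:ℝ)+1) (i+1) = ((N:ℝ)+1) * fallingFactorial N i := by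
  rw [fallingFactorial, fallingFactorial, Finset.prod_range_succ', mul_comm]
  congr 1
  · norm_num
  · apply Finset.prod_congr rfl
    intro j _
    push_cast
    ring

/-- Unrolled recursion: for `2 ≤ r ≤ N`,
`a_{r,0}(N+1,x) = -r · ∑_{i=0}^{N-r+1} (-1)^i (N)_i · a_{r-1,0}(N-i,x)`. -/
theorem aCh_r_zero_unrolled (N r : ℕ) (hr1 : 2 ≤ r) (hr2 : r ≤ N) (x : ℝ) :
    aCh (N + 1) (r : ℤ) 0 x
      = -(r : ℝ) *
          ∑ i ∈ Finset.range (N - r + 2),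
            (-1 : ℝ) ^ i * fallingFactorial (N : ℝ) i * aCh (N - i) ((r : ℤ) - 1) 0 x := by
  induction N, hr2 using Nat.le_induction with
  | base =>
    obtain ⟨s, rfl⟩ : ∃ s, r = s + 2 := ⟨r - 2, by omega⟩
    rw [show s + 2 - (s + 2) + 2 = 2 by omega]
    rw [Finset.sum_range_succ, Finset.sum_range_succ, Finset.sum_range_zero]
    rw [show (s+2) + 1 = (s+1) + 2 from rfl,
        aCh_rec (s+1) ((s+2 : ℕ) : ℤ) (by push_cast; omega) (by push_cast; omega),
        show (s+1) + 1 = s + 2 from rfl,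
        aCh_rec s ((s+2 : ℕ) : ℤ) (by push_cast; omega) (by push_cast; omega),
        aCh_zero_of_gt (s+1) ((s+2 : ℕ) : ℤ) (by push_cast; omega)]
    simp only [Nat.add_sub_cancel, Nat.sub_zero, pow_zero, pow_one, fallingFactorial,
      Finset.prod_range_one, Finset.prod_range_zero, Nat.cast_zero, sub_zero]
    push_cast
    ring
  | succ n hn ih =>
    have key : ∀ i ∈ Finset.range (n - r + 2),
        (-1 : ℝ) ^ (i+1) * fallingFactorial ((n:ℝ)+1) (i+1) * aCh (n - i) ((r:ℤ)-1) 0 x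
          = (-((n:ℝ)+1)) * ((-1:ℝ)^i * fallingFactorial (n : ℝ) i * aCh (n - i) ((r:ℤ)-1) 0 x) := by
      intro i _
      rw [ff_succ]
      ring
    conv_rhs => rw [show n + 1 - r + 2 = (n - r + 2) + 1 by omega, Finset.sum_range_succ']
    push_cast
    rw [Finset.sum_congr rfl key, ← Finset.mul_sum,
        show n + 1 + 1 = n + 2 from rfl,
        aCh_rec n ((r:ℕ):ℤ) (by omega) (by omega), ih]
    simp only [pow_zero, one_mul, Nat.sub_zero, fallingFactorial, Finset.prod_range_zero]
    push_cast
    ring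
end
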